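/- Let q ≥ 5 be a prime power whose characteristic p does not divide n. Then the number of elements α in F_{q^n} that generate F_{q^n} over F_q, have nonzero trace to F_q, and for which x² - αx + 1 is irreducible over F_{q^n}, is at least ((q-1)/q)·Σ_{d|n} μ(d) q^{n/d} - (q^n + 1)/2, and in particular is positive. -/

import Mathlib

open Polynomial ArithmeticFunction

open Finset IntermediateField

set_option linter.unusedSectionVars false
set_option linter.unusedVariables false

section Aux

private lemma cyc_count  {G : Type*} [Group G] [Fintype G] [IsCyclic G] [DecidableEq G] {d : ℕ}
    (hd : d ∣ Fintype.card G) (hd0 : 0 < d) :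
    (Finset.univ.filter fun x : G => x ^ d = 1).card = d := by
  refine le_antisymm (IsCyclic.card_pow_eq_one_le hd0) ?_
  obtain ⟨g, hg⟩ := IsCyclic.exists_generator (α := G)
  have hog : orderOf g = Fintype.card G :=
    (orderOf_eq_card_of_forall_mem_zpowers hg).trans Nat.card_eq_fintype_card
  set N := Fintype.card G with hN
  have hN0 : 0 < N := Fintype.card_pos
  have ha : orderOf (g ^ (N / d)) = d := by
    rw [orderOf_pow, hog, Nat.gcd_eq_right (Nat.div_dvd_of_dvd hd), Nat.div_div_self hd hN0.ne']
  have h1 := pow_orderOf_eq_one (g ^ (N / d))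
  rw [ha] at h1
  refine Finset.le_card_of_inj_on_range ((g ^ (N/d)) ^ ·) (fun i _ => Finset.mem_filter.2
    ⟨Finset.mem_univ _, by rw [← pow_mul, mul_comm, pow_mul, h1, one_pow]⟩) ?_
  intro i hi j hj hij
  exact pow_injOn_Iio_orderOf (by simpa [ha] using hi) (by simpa [ha] using hj) hij

private lemma count_fixed {L : Type*} [Field L] [Fintype L] [DecidableEq L] {e : ℕ} (he : 2 ≤ e)
    (hdvd : e - 1 ∣ Fintype.card L - 1) :
    (Finset.univ.filter fun x : L => x ^ e = x).card = e := by
  have he1 : e - 1 + 1 = e := by omega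
  have key : (Finset.univ.filter fun u : Lˣ => u ^ (e-1) = 1).card = e - 1 :=
    cyc_count (by rwa [Fintype.card_units]) (by omega)
  have hset : (Finset.univ.filter fun x : L => x ^ e = x) =
      insert (0 : L) ((Finset.univ.filter fun u : Lˣ => u ^ (e-1) = 1).image Units.val) := by
    ext x
    simp only [mem_filter, mem_univ, true_and, mem_insert, mem_image]
    constructor
    · intro hx
      rcases eq_or_ne x 0 with rfl | hx0
      · exact Or.inl rfl
      · refine Or.inr ⟨Units.mk0 x hx0, ?_, rfl⟩
        have hx1 : x ^ (e - 1) = 1 := by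
          have : x ^ (e - 1) * x = 1 * x := by
            rw [one_mul, ← pow_succ, he1]; exact hx
          exact mul_right_cancel₀ hx0 this
        ext
        simp [hx1]
    · rintro (rfl | ⟨u, hu, rfl⟩)
      · exact zero_pow (by omega)
      · have hx1 : (u : L) ^ (e - 1) = 1 := by
          have := congrArg (Units.val) hu
          simpa using this
        rw [← he1, pow_succ, hx1, one_mul]
  rw [hset, card_insert_of_notMem, card_image_of_injective _ Units.val_injective, key]
  · omega
  · simp only [mem_image, mem_filter]
    rintro ⟨u, -, hu⟩
    exact u.ne_zero hu

variable {K L : Type} [Field K] [Fintype K] [Field L] [Fintype L] [Algebra K L]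
  {p q n : ℕ}

private lemma deg_dvd [DecidableEq L] (hp : p.Prime) [CharP K p] (hq : Fintype.card K = q)
    (h5 : 5 ≤ q) (hn : Module.finrank K L = n)
    {m : ℕ} (hm : m ∣ n) (hm0 : m ≠ 0) (α : L) :
    α ^ q ^ m = α ↔ Module.finrank K K⟮α⟯ ∣ m := by
  have hq2 : 2 ≤ q := by omega
  have hcardL : Fintype.card L = q ^ n := by rw [Module.card_eq_pow_finrank (K := K), hq, hn]
  classical
  haveI : Fact p.Prime := ⟨hp⟩
  constructor
  · intro h
    -- construct the fixed subfield
    haveI : CharP L p := charP_of_injective_algebraMap (algebraMap K L).injective p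
    obtain ⟨v, hpp, hv⟩ := FiniteField.card K p
    rw [hq] at hv
    have hqm : q ^ m = p ^ ((v : ℕ) * m) := by rw [hv, ← pow_mul]
    have hSalg : ∀ k : K, (algebraMap K L k) ^ q ^ m = algebraMap K L k := by
      intro k
      rw [← map_pow]
      congr 1
      rw [← hq]
      exact FiniteField.pow_card_pow m k
    let S : Subalgebra K L :=
      { carrier := {x : L | x ^ q ^ m = x}
        mul_mem' := fun {a b} ha hb => by
          simp only [Set.mem_setOf_eq] at *
          rw [mul_pow, ha, hb]
        one_mem' := one_pow _
        add_mem' := fun {a b} ha hb => by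
          simp only [Set.mem_setOf_eq] at *
          rw [hqm] at ha hb ⊢
          rw [add_pow_char_pow, ha, hb]
        zero_mem' := zero_pow (by positivity)
        algebraMap_mem' := fun k => hSalg k }
    let E : IntermediateField K L := S.toIntermediateField (fun x hx => by
      show x⁻¹ ^ q ^ m = x⁻¹
      rw [inv_pow, hx])
    have hmemE : ∀ x : L, x ∈ E ↔ x ^ q ^ m = x := fun x => Iff.rfl
    have hcardE : Fintype.card E = q ^ m := by
      rw [Fintype.card_of_subtype (Finset.univ.filter fun x : L => x ^ q ^ m = x)
        (fun x => by simp [hmemE])]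
      refine count_fixed (by calc 2 ≤ q := hq2
                               _ ≤ q ^ m := Nat.le_self_pow hm0 q) ?_
      rw [hcardL]
      obtain ⟨k, rfl⟩ := hm
      simpa [pow_mul] using Nat.sub_dvd_pow_sub_pow (q ^ m) 1 k
    have hfinE : Module.finrank K E = m := by
      have := Module.card_eq_pow_finrank (K := K) (V := E)
      rw [hcardE, hq] at this
      exact (Nat.pow_right_injective hq2 this.symm)
    have hle : K⟮α⟯ ≤ E := by
      rw [adjoin_le_iff]
      intro x hx
      rcases hx with rfl
      exact h
    rw [← hfinE]
    exact ⟨_, (IntermediateField.finrank_bot_mul_relfinrank hle).symm⟩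
  · intro hd
    set d := Module.finrank K K⟮α⟯ with hdd
    have hcardA : Fintype.card K⟮α⟯ = q ^ d := by rw [Module.card_eq_pow_finrank (K := K), hq]
    have hgen := FiniteField.pow_card (AdjoinSimple.gen K α)
    rw [hcardA] at hgen
    have hαd : α ^ q ^ d = α := by
      have := congrArg (fun x : K⟮α⟯ => (x : L)) hgen
      simpa [SubmonoidClass.coe_pow] using this
    obtain ⟨k, hk⟩ := hd
    have hiter : ∀ j, α ^ (q ^ d) ^ j = α := by
      intro j
      induction j with
      | zero => simp
      | succ j ih => rw [pow_succ, pow_mul, ih, hαd]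
    rw [hk, pow_mul]
    exact hiter k

open scoped Classical in
private lemma gen_count (hp : p.Prime) [CharP K p] (hq : Fintype.card K = q)
    (h5 : 5 ≤ q) (hn : Module.finrank K L = n) (hn1 : 1 ≤ n) :
    ((Finset.univ.filter fun α : L => IntermediateField.adjoin K {α} = ⊤).card : ℚ)
      = ∑ d ∈ n.divisors, (moebius d : ℚ) * (q : ℚ) ^ (n / d) := by
  classical
  have hq2 : 2 ≤ q := by omega
  have hcardL : Fintype.card L = q ^ n := by rw [Module.card_eq_pow_finrank (K := K), hq, hn]
  set f : ℕ → ℚ := fun m => ((Finset.univ.filter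
    fun α : L => Module.finrank K K⟮α⟯ = m).card : ℚ) with hf
  have hsum : ∀ m > 0, m ∈ {i : ℕ | i ∣ n} → (∑ i ∈ m.divisors, f i) = (q : ℚ) ^ m := by
    intro m hm0 hmn
    have hmn' : m ∣ n := hmn
    have hfix : (Finset.univ.filter fun x : L => x ^ q ^ m = x).card = q ^ m := by
      refine count_fixed (le_trans hq2 (Nat.le_self_pow (by omega) q)) ?_
      rw [hcardL]
      obtain ⟨k, rfl⟩ := hmn'
      simpa [pow_mul] using Nat.sub_dvd_pow_sub_pow (q ^ m) 1 k
    have hset : (Finset.univ.filter fun x : L => x ^ q ^ m = x)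
        = (Finset.univ.filter fun x : L => Module.finrank K K⟮x⟯ ∣ m) := by
      ext x
      simp only [mem_filter, mem_univ, true_and]
      exact deg_dvd hp hq h5 hn hmn' (by omega) x
    have hfib := Finset.card_eq_sum_card_fiberwise
      (f := fun x : L => Module.finrank K K⟮x⟯)
      (s := Finset.univ.filter fun x : L => Module.finrank K K⟮x⟯ ∣ m)
      (t := m.divisors) (fun x hx => by
        simp only [Finset.mem_coe, mem_filter, mem_univ, true_and] at hx
        exact Nat.mem_divisors.mpr ⟨hx, by omega⟩)
    have hfib2 : ∀ i ∈ m.divisors,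
        ((Finset.univ.filter fun x : L => Module.finrank K K⟮x⟯ ∣ m).filter
          fun x => Module.finrank K K⟮x⟯ = i).card
        = (Finset.univ.filter fun x : L => Module.finrank K K⟮x⟯ = i).card := by
      intro i hi
      congr 1
      ext x
      simp only [mem_filter, mem_univ, true_and]
      constructor
      · tauto
      · intro h; exact ⟨h ▸ (Nat.mem_divisors.mp hi).1, h⟩
    have : q ^ m = ∑ i ∈ m.divisors,
        (Finset.univ.filter fun x : L => Module.finrank K K⟮x⟯ = i).card := by
      rw [← hfix, hset, hfib]
      exact Finset.sum_congr rfl hfib2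
    show (∑ i ∈ m.divisors, ((Finset.univ.filter
      fun α : L => Module.finrank K K⟮α⟯ = i).card : ℚ)) = (q : ℚ) ^ m
    rw [← Nat.cast_sum, ← this]
    push_cast
    ring
  have key := (sum_eq_iff_sum_smul_moebius_eq_on {i : ℕ | i ∣ n}
    (fun a b hab hb => hab.trans hb)).mp hsum n (by omega) (dvd_refl n)
  rw [Nat.sum_divisorsAntidiagonal (fun a b => (moebius a) • ((q : ℚ) ^ b))] at key
  have hgenset : (Finset.univ.filter fun α : L => Module.finrank K K⟮α⟯ = n)
      = (Finset.univ.filter fun α : L => IntermediateField.adjoin K {α} = ⊤) := by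
    ext α
    simp only [mem_filter, mem_univ, true_and]
    constructor
    · intro h
      refine IntermediateField.eq_of_le_of_finrank_eq le_top ?_
      rw [h, IntermediateField.finrank_top', hn]
    · intro h
      rw [show K⟮α⟯ = (⊤ : IntermediateField K L) from h, IntermediateField.finrank_top', hn]
  have hgen : f n = ((Finset.univ.filter
      fun α : L => IntermediateField.adjoin K {α} = ⊤).card : ℚ) := by
    show ((Finset.univ.filter fun α : L => Module.finrank K K⟮α⟯ = n).card : ℚ) = _
    rw [hgenset]
  rw [← hgen, ← key]
  exact Finset.sum_congr rfl fun d _ => by rw [zsmul_eq_mul]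

open scoped Classical in
private lemma trace_fiber (hp : p.Prime) [CharP K p] (hn : Module.finrank K L = n)
    (hpn : ¬ p ∣ n) (c c' : K) :
    (Finset.univ.filter fun α : L =>
        IntermediateField.adjoin K {α} = ⊤ ∧ Algebra.trace K L α = c).card
    = (Finset.univ.filter fun α : L =>
        IntermediateField.adjoin K {α} = ⊤ ∧ Algebra.trace K L α = c').card := by
  have hnK : (n : K) ≠ 0 := by
    rw [Ne, CharP.cast_eq_zero_iff K p]; exact hpn
  set t : K := (c' - c) * (n : K)⁻¹ with ht
  have hnt : (n : K) * t = c' - c := by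
    rw [ht, mul_comm, mul_assoc, inv_mul_cancel₀ hnK, mul_one]
  have hadj : ∀ (α : L) (s : K),
      IntermediateField.adjoin K {α + algebraMap K L s} = IntermediateField.adjoin K {α} := by
    intro α s
    apply le_antisymm
    · rw [adjoin_le_iff, Set.singleton_subset_iff]
      exact add_mem (mem_adjoin_simple_self K α) (IntermediateField.algebraMap_mem _ s)
    · rw [adjoin_le_iff, Set.singleton_subset_iff]
      have h1 := mem_adjoin_simple_self K (α + algebraMap K L s)
      have h3 := sub_mem h1 (IntermediateField.algebraMap_mem K⟮α + algebraMap K L s⟯ s)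
      simpa using h3
  have htr : ∀ (α : L) (s : K),
      Algebra.trace K L (α + algebraMap K L s) = Algebra.trace K L α + (n : K) * s := by
    intro α s
    rw [map_add, Algebra.trace_algebraMap, hn, nsmul_eq_mul]
  refine Finset.card_bij' (fun α _ => α + algebraMap K L t)
    (fun β _ => β - algebraMap K L t) ?_ ?_ ?_ ?_
  · intro a ha
    simp only [mem_filter, mem_univ, true_and] at ha ⊢
    refine ⟨(hadj a t).trans ha.1, ?_⟩
    rw [htr, ha.2, hnt]
    ring
  · intro b hb
    simp only [mem_filter, mem_univ, true_and] at hb ⊢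
    have hb' : b - algebraMap K L t = b + algebraMap K L (-t) := by
      rw [map_neg]; ring
    constructor
    · rw [hb', hadj]; exact hb.1
    · rw [hb', htr, hb.2, mul_neg, hnt]; ring
  · intro a _; ring
  · intro b _; ring

open scoped Classical in
private lemma red_bound (hq : Fintype.card K = q) (hn : Module.finrank K L = n) :
    2 * (Finset.univ.filter fun α : L =>
      ¬ Irreducible (X ^ 2 - C α * X + 1 : L[X])).card ≤ q ^ n + 1 := by
  have hcardL : Fintype.card L = q ^ n := by rw [Module.card_eq_pow_finrank (K := K), hq, hn]
  have hcardU : Fintype.card Lˣ = q ^ n - 1 := by rw [Fintype.card_units, hcardL]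
  have hqn1 : 1 ≤ q ^ n := hcardL ▸ Fintype.card_pos
  set φ : Lˣ → L := fun u => -((u : L) + ((u⁻¹ : Lˣ) : L)) with hφ
  set I : Finset L := (Finset.univ : Finset Lˣ).image φ with hI
  set E : Finset L := ({-2, 2} : Finset L) with hE
  -- Red ⊆ I
  have hsub : (Finset.univ.filter fun α : L =>
      ¬ Irreducible (X ^ 2 - C α * X + 1 : L[X])) ⊆ I := by
    intro α hα
    rw [mem_filter] at hα
    obtain ⟨-, hα⟩ := hα
    have hmonic : (X ^ 2 - C α * X + 1 : L[X]).Monic := by monicity!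
    have hdeg : (X ^ 2 - C α * X + 1 : L[X]).natDegree = 2 := by compute_degree!
    rw [hmonic.not_irreducible_iff_exists_add_mul_eq_coeff hdeg] at hα
    obtain ⟨c₁, c₂, h0, h1⟩ := hα
    have hc0 : (X ^ 2 - C α * X + 1 : L[X]).coeff 0 = 1 := by
      simp [coeff_one]
    have hc1 : (X ^ 2 - C α * X + 1 : L[X]).coeff 1 = -α := by
      simp [coeff_one]
    rw [hc0] at h0
    rw [hc1] at h1
    have hc₁ : c₁ ≠ 0 := by rintro rfl; simp at h0
    have hc₂ : c₂ = c₁⁻¹ := eq_inv_of_mul_eq_one_right h0.symm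
    rw [hI]
    refine Finset.mem_image.mpr ⟨Units.mk0 c₁ hc₁, Finset.mem_univ _, ?_⟩
    rw [hφ]
    simp only [Units.val_mk0, ← Units.val_inv_eq_inv_val]
    rw [show ((Units.mk0 c₁ hc₁)⁻¹ : Lˣ) = Units.mk0 c₁⁻¹ (inv_ne_zero hc₁) by
      ext; simp, Units.val_mk0, ← hc₂]
    rw [← h1]
    ring
  have hfib := Finset.card_eq_sum_card_image φ (Finset.univ : Finset Lˣ)
  rw [Finset.card_univ, hcardU, ← hI] at hfib
  have h2fib : ∀ β ∈ I.filter (· ∉ E), 2 ≤ ((Finset.univ : Finset Lˣ).filter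
      fun u => φ u = β).card := by
    intro β hβ
    rw [mem_filter] at hβ
    obtain ⟨hβI, hβE⟩ := hβ
    obtain ⟨u, -, hu⟩ := Finset.mem_image.mp hβI
    have hne : u ≠ u⁻¹ := by
      intro heq
      have huu : (u : L) * (u : L) = 1 := by
        have h1 : u * u = 1 := by nth_rewrite 2 [heq]; simp
        have h2 := congrArg (Units.val) h1
        simpa using h2
      have hsplit : ((u : L) - 1) * ((u : L) + 1) = 0 := by linear_combination huu
      apply hβE
      rcases mul_eq_zero.mp hsplit with h | h
      · have hu1 : (u : L) = 1 := by linear_combination h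
        have hval : φ u = -2 := by
          rw [hφ]
          simp only [Units.val_inv_eq_inv_val, hu1]
          norm_num
        rw [hE, ← hu, hval]
        simp
      · have hu1 : (u : L) = -1 := by linear_combination h
        have hval : φ u = 2 := by
          rw [hφ]
          simp only [Units.val_inv_eq_inv_val, hu1]
          norm_num
        rw [hE, ← hu, hval]
        simp
    have hmem : ({u, u⁻¹} : Finset Lˣ) ⊆ (Finset.univ : Finset Lˣ).filter
        (fun w => φ w = β) := by
      intro w hw
      rw [mem_insert, mem_singleton] at hw
      rw [mem_filter]
      rcases hw with rfl | rfl
      · exact ⟨mem_univ _, hu⟩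
      · refine ⟨mem_univ _, ?_⟩
        rw [← hu, hφ]
        simp only [inv_inv]
        ring
    calc 2 = ({u, u⁻¹} : Finset Lˣ).card := (Finset.card_pair hne).symm
      _ ≤ _ := Finset.card_le_card hmem
  have h1fib : ∀ β ∈ I.filter (· ∈ E), 1 ≤ ((Finset.univ : Finset Lˣ).filter
      fun u => φ u = β).card := by
    intro β hβ
    rw [mem_filter] at hβ
    obtain ⟨u, -, hu⟩ := Finset.mem_image.mp hβ.1
    exact Finset.card_pos.mpr ⟨u, mem_filter.mpr ⟨mem_univ _, hu⟩⟩
  set a := (I.filter (· ∉ E)).card with ha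
  set b := (I.filter (· ∈ E)).card with hb
  have hIab : b + a = I.card := by
    rw [ha, hb]
    exact Finset.card_filter_add_card_filter_not (fun β => β ∈ E)
  have hbE : b ≤ 2 := by
    have h1 : I.filter (· ∈ E) ⊆ E := fun x hx => (Finset.mem_filter.mp hx).2
    have h2 : E.card ≤ 2 := by
      rw [hE]
      exact (Finset.card_insert_le _ _).trans (by simp)
    exact (Finset.card_le_card h1).trans h2
  have hsum : 2 * a + b ≤ q ^ n - 1 := by
    rw [hfib, ← Finset.sum_filter_add_sum_filter_not I (· ∈ E)
      (fun β => ((Finset.univ : Finset Lˣ).filter fun u => φ u = β).card)]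
    have hA := Finset.card_nsmul_le_sum (I.filter (· ∉ E))
      (fun β => ((Finset.univ : Finset Lˣ).filter fun u => φ u = β).card) 2 h2fib
    have hB := Finset.card_nsmul_le_sum (I.filter (· ∈ E))
      (fun β => ((Finset.univ : Finset Lˣ).filter fun u => φ u = β).card) 1 h1fib
    simp only [smul_eq_mul] at hA hB
    omega
  have hcard := Finset.card_le_card hsub
  omega
end Aux

open scoped Classical in
/-- For `q ≥ 5` a prime power of characteristic `p` with `p ∤ n`, the number of
`α ∈ F_{q^n}` generating `F_{q^n}` over `F_q`, of nonzero trace, and with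
`x² - αx + 1` irreducible over `F_{q^n}` is at least
`((q-1)/q)·Σ_{d|n} μ(d) q^(n/d) - (q^n + 1)/2`, and in particular positive. -/
theorem stmt15 {K L : Type} [Field K] [Fintype K] [Field L] [Fintype L] [Algebra K L]
    {p q n : ℕ} (hp : p.Prime) [CharP K p] (hq : Fintype.card K = q)
    (h5 : 5 ≤ q) (hn : Module.finrank K L = n) (hn1 : 1 ≤ n) (hpn : ¬ p ∣ n) :
    ((q : ℚ) - 1) / q * ∑ d ∈ n.divisors, (moebius d : ℚ) * (q : ℚ) ^ (n / d)
        - ((q : ℚ) ^ n + 1) / 2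
      ≤ (Nat.card {α : L // IntermediateField.adjoin K {α} = ⊤ ∧
          Algebra.trace K L α ≠ 0 ∧ Irreducible (X ^ 2 - C α * X + 1 : L[X])} : ℚ) ∧
    0 < Nat.card {α : L // IntermediateField.adjoin K {α} = ⊤ ∧
          Algebra.trace K L α ≠ 0 ∧ Irreducible (X ^ 2 - C α * X + 1 : L[X])} := by
  have hq5 : (5 : ℚ) ≤ (q : ℚ) := by exact_mod_cast h5
  have hq0 : (q : ℚ) ≠ 0 := by linarith
  have hn0 : n ≠ 0 := by omega
  set M : ℚ := ∑ d ∈ n.divisors, (moebius d : ℚ) * (q : ℚ) ^ (n / d) with hM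
  set P : L → Prop := fun α => IntermediateField.adjoin K {α} = ⊤ ∧
      Algebra.trace K L α ≠ 0 ∧ Irreducible (X ^ 2 - C α * X + 1 : L[X]) with hP
  set F := Finset.univ.filter P with hF
  have hNat : Nat.card {α : L // P α} = F.card := by
    rw [Nat.card_eq_fintype_card, hF, Fintype.card_subtype]
  set G := Finset.univ.filter
    (fun α : L => IntermediateField.adjoin K {α} = ⊤) with hG
  set G0 := Finset.univ.filter (fun α : L =>
    IntermediateField.adjoin K {α} = ⊤ ∧ Algebra.trace K L α = 0) with hG0
  set GT := Finset.univ.filter (fun α : L =>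
    IntermediateField.adjoin K {α} = ⊤ ∧ Algebra.trace K L α ≠ 0) with hGT
  set Red := Finset.univ.filter (fun α : L =>
    ¬ Irreducible (X ^ 2 - C α * X + 1 : L[X])) with hRed
  have hGM : (G.card : ℚ) = M := gen_count hp hq h5 hn hn1
  have hGc : ∀ c : K, G.filter (fun α => Algebra.trace K L α = c)
      = Finset.univ.filter (fun α : L =>
        IntermediateField.adjoin K {α} = ⊤ ∧ Algebra.trace K L α = c) := by
    intro c; rw [hG, Finset.filter_filter]
  have hGq : G.card = q * G0.card := by
    have hfibG := Finset.card_eq_sum_card_fiberwise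
      (f := fun α : L => Algebra.trace K L α) (s := G) (t := (Finset.univ : Finset K))
      (fun x _ => Finset.mem_univ _)
    rw [hfibG]
    have hcc : ∀ c ∈ (Finset.univ : Finset K),
        (G.filter fun α => Algebra.trace K L α = c).card = G0.card := by
      intro c _
      rw [hGc c, hG0]
      exact trace_fiber hp hn hpn c 0
    rw [Finset.sum_congr rfl hcc, Finset.sum_const, smul_eq_mul, Finset.card_univ, hq]
  have hsplit : G0.card + GT.card = G.card := by
    have h := Finset.card_filter_add_card_filter_not (s := G)
      (p := fun α => Algebra.trace K L α = 0)
    rw [hGc 0] at h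
    have h2 : G.filter (fun α => ¬ Algebra.trace K L α = 0) = GT := by
      rw [hG, Finset.filter_filter, hGT]
    rw [h2, ← hG0] at h
    exact h
  have hunion : GT.card ≤ F.card + Red.card := by
    have hsub : GT ⊆ F ∪ Red := by
      intro α hα
      rw [hGT, Finset.mem_filter] at hα
      by_cases hirr : Irreducible (X ^ 2 - C α * X + 1 : L[X])
      · exact Finset.mem_union_left _ (Finset.mem_filter.mpr
          ⟨Finset.mem_univ _, hα.2.1, hα.2.2, hirr⟩)
      · exact Finset.mem_union_right _ (Finset.mem_filter.mpr ⟨Finset.mem_univ _, hirr⟩)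
    exact (Finset.card_le_card hsub).trans (Finset.card_union_le _ _)
  have hred : 2 * (Red.card : ℚ) ≤ (q : ℚ) ^ n + 1 := by
    have := red_bound (K := K) (L := L) hq hn
    rw [← hRed] at this
    exact_mod_cast this
  have hGq' : (G.card : ℚ) = (q : ℚ) * G0.card := by exact_mod_cast hGq
  have hsplit' : (G0.card : ℚ) + GT.card = G.card := by exact_mod_cast hsplit
  have hunion' : (GT.card : ℚ) ≤ F.card + Red.card := by exact_mod_cast hunion
  have hdiv : ((q : ℚ) - 1) / q * M = M - M / q := by field_simp
  have hG0M : (G0.card : ℚ) = M / q := by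
    rw [eq_div_iff hq0]
    rw [← hGM, hGq']
    ring
  have bound1 : ((q : ℚ) - 1) / q * M - ((q : ℚ) ^ n + 1) / 2 ≤ (F.card : ℚ) := by
    rw [hdiv]
    linarith
  -- positivity of the lower bound
  have hmoe : ∀ d : ℕ, (-1 : ℚ) ≤ (moebius d : ℚ) := by
    intro d
    have : moebius d = -1 ∨ moebius d = 0 ∨ moebius d = 1 := by
      by_cases hsq : Squarefree d
      · have habs := ArithmeticFunction.abs_moebius_eq_one_of_squarefree hsq
        rcases (abs_eq (by norm_num : (0:ℤ) ≤ 1)).mp habs with h | h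
        · right; right; exact h
        · left; exact h
      · right; left; exact ArithmeticFunction.moebius_eq_zero_of_not_squarefree hsq
    rcases this with h | h | h <;> rw [h] <;> norm_num
  have hkey : ((q : ℚ) ^ n + 1) / 2 < ((q : ℚ) - 1) / q * M := by
    have h1div : (1 : ℕ) ∈ n.divisors := Nat.one_mem_divisors.mpr hn0
    have hMsplit := Finset.add_sum_erase n.divisors
      (fun d => (moebius d : ℚ) * (q : ℚ) ^ (n / d)) h1div
    have hMeq : M = (q : ℚ) ^ n + ∑ d ∈ n.divisors.erase 1,
        (moebius d : ℚ) * (q : ℚ) ^ (n / d) := by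
      rw [hM, ← hMsplit]
      simp
    set S : ℚ := ∑ d ∈ n.divisors.erase 1, (q : ℚ) ^ (n / d) with hS
    have hMlb : (q : ℚ) ^ n - S ≤ M := by
      rw [hMeq, hS]
      have : ∀ d ∈ n.divisors.erase 1,
          -((q : ℚ) ^ (n / d)) ≤ (moebius d : ℚ) * (q : ℚ) ^ (n / d) := by
        intro d _
        have h1 := hmoe d
        nlinarith [pow_nonneg (by linarith : (0:ℚ) ≤ (q : ℚ)) (n / d)]
      have := Finset.sum_le_sum this
      rw [Finset.sum_neg_distrib] at this
      linarith
    rcases Nat.lt_or_ge n 2 with hn2 | hn2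
    · -- n = 1
      have hn1' : n = 1 := by omega
      subst hn1'
      have hSz : S = 0 := by
        rw [hS]
        simp [Nat.divisors_one]
      have hMub : M = (q : ℚ) := by
        rw [hMeq]
        simp [Nat.divisors_one]
      rw [hMub]
      have hqq : ((q : ℚ) - 1) / q * q = q - 1 := by field_simp
      rw [hqq, pow_one]
      linarith
    · -- n ≥ 2
      have hSub : S ≤ (q : ℚ) ^ n / 4 := by
        have hinj : Set.InjOn (fun d => n / d) (n.divisors.erase 1 : Finset ℕ) := by
          intro d₁ h₁ d₂ h₂ hdd
          have hd₁ : d₁ ∣ n := Nat.dvd_of_mem_divisors (Finset.mem_of_mem_erase h₁)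
          have hd₂ : d₂ ∣ n := Nat.dvd_of_mem_divisors (Finset.mem_of_mem_erase h₂)
          have e₁ : n / (n / d₁) = d₁ := Nat.div_div_self hd₁ hn0
          have e₂ : n / (n / d₂) = d₂ := Nat.div_div_self hd₂ hn0
          simp only at hdd
          rw [← e₁, ← e₂, hdd]
        have hSimg : S = ∑ e ∈ (n.divisors.erase 1).image (fun d => n / d),
            (q : ℚ) ^ e := by
          rw [hS, Finset.sum_image (fun a ha b hb hab => hinj ha hb hab)]
        have himg : (n.divisors.erase 1).image (fun d => n / d) ⊆
            Finset.Icc 1 (n / 2) := by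
          intro e he
          obtain ⟨d, hd, rfl⟩ := Finset.mem_image.mp he
          have hd1 : d ≠ 1 := Finset.ne_of_mem_erase hd
          have hdn : d ∣ n := Nat.dvd_of_mem_divisors (Finset.mem_of_mem_erase hd)
          have hd0 : d ≠ 0 := by rintro rfl; exact hn0 (Nat.eq_zero_of_zero_dvd hdn)
          have hd2 : 2 ≤ d := by omega
          have hdle : d ≤ n := Nat.le_of_dvd (by omega) hdn
          rw [Finset.mem_Icc]
          constructor
          · exact (Nat.one_le_div_iff (by omega)).mpr hdle
          · exact Nat.div_le_div_left hd2 (by omega)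
        have hstep1 : S ≤ ∑ e ∈ Finset.Icc 1 (n / 2), (q : ℚ) ^ e := by
          rw [hSimg]
          exact Finset.sum_le_sum_of_subset_of_nonneg himg
            (fun i _ _ => by positivity)
        have hstep2 : ∑ e ∈ Finset.Icc 1 (n / 2), (q : ℚ) ^ e
            ≤ ∑ e ∈ Finset.range (n / 2 + 1), (q : ℚ) ^ e := by
          refine Finset.sum_le_sum_of_subset_of_nonneg ?_ (fun i _ _ => by positivity)
          intro i hi
          rw [Finset.mem_Icc] at hi
          rw [Finset.mem_range]
          omega
        have hgeom : ∑ e ∈ Finset.range (n / 2 + 1), (q : ℚ) ^ e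
            = ((q : ℚ) ^ (n / 2 + 1) - 1) / ((q : ℚ) - 1) :=
          geom_sum_eq (by linarith) _
        have hple : (q : ℚ) ^ (n / 2 + 1) ≤ (q : ℚ) ^ n := by
          apply pow_le_pow_right₀ (by linarith)
          omega
        have hq4 : (4 : ℚ) ≤ (q : ℚ) - 1 := by linarith
        have hfrac : ((q : ℚ) ^ (n / 2 + 1) - 1) / ((q : ℚ) - 1) ≤ (q : ℚ) ^ n / 4 := by
          apply div_le_div₀ (by positivity) (by linarith) (by norm_num) hq4
        linarith
      have hM34 : (3 / 4 : ℚ) * (q : ℚ) ^ n ≤ M := by linarith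
      have h45 : (4 / 5 : ℚ) ≤ ((q : ℚ) - 1) / q := by
        rw [le_div_iff₀ (by linarith)]
        linarith
      have hQ25 : (25 : ℚ) ≤ (q : ℚ) ^ n := by
        calc (25 : ℚ) = 5 ^ 2 := by norm_num
          _ ≤ (q : ℚ) ^ 2 := by
            apply pow_le_pow_left₀ (by norm_num) hq5
          _ ≤ (q : ℚ) ^ n := by
            apply pow_le_pow_right₀ (by linarith) hn2
      have hchain : (3 / 5 : ℚ) * (q : ℚ) ^ n ≤ ((q : ℚ) - 1) / q * M := by
        calc (3 / 5 : ℚ) * (q : ℚ) ^ n = (4 / 5) * ((3 / 4) * (q : ℚ) ^ n) := by ring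
          _ ≤ (((q : ℚ) - 1) / q) * ((3 / 4) * (q : ℚ) ^ n) :=
              mul_le_mul_of_nonneg_right h45 (by positivity)
          _ ≤ (((q : ℚ) - 1) / q) * M := by
              apply mul_le_mul_of_nonneg_left hM34
              linarith
      linarith
  have hFpos : 0 < F.card := by
    have : (0 : ℚ) < (F.card : ℚ) := by linarith
    exact_mod_cast this
  constructor
  · rw [hNat]
    exact bound1
  · rw [hNat]
    exact hFpos
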